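/- Let f : ℝ → [0,∞) be continuous with v_f(θ,x) < ∞ for all (θ,x) ∈ [0,T0]×ℝ, where T0 > 0. Suppose there exists a continuous function θ̆ : ℝ → [0,T0] such that am_{T0}(f)(x) = v_f(θ̆(x), x) for every x ∈ ℝ. Set g := am_{T0}(f). Then for every x ∈ ℝ such that 0 < θ̆(x) < T0 and g is twice differentiable at x, the concavity condition (σ²/2)·g''(x) + (r - σ²/2)·g'(x) - r·g(x) ≤ 0 holds. -/

import Mathlib

open MeasureTheory Filter Set
open scoped ENNReal

/-- Gaussian density with mean `m` and variance `s2`. -/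
noncomputable def gauss (m s2 y : ℝ) : ℝ :=
  (Real.sqrt (2 * Real.pi * s2))⁻¹ * Real.exp (-((y - m) ^ 2) / (2 * s2))

/-- European value of a payoff function `f`:
`v_f(θ,x) = e^{-rθ} ∫ N(x+r̂θ,σ²θ,y) f(y) dy` for `θ > 0`, `v_f(0,x) = f(x)`. -/
noncomputable def vEu (r σ : ℝ) (f : ℝ → ℝ) (θ x : ℝ) : ℝ :=
  if θ = 0 then f x
  else Real.exp (-(r * θ)) * ∫ y, gauss (x + (r - σ ^ 2 / 2) * θ) (σ ^ 2 * θ) y * f y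

lemma gauss_nonneg (m s2 y : ℝ) : 0 ≤ gauss m s2 y := by
  unfold gauss; positivity

lemma gauss_pos (m : ℝ) {s2 : ℝ} (hs : 0 < s2) (y : ℝ) : 0 < gauss m s2 y := by
  unfold gauss
  have : 0 < Real.sqrt (2 * Real.pi * s2) :=
    Real.sqrt_pos.2 (by positivity)
  positivity

lemma gauss_continuous (m s2 : ℝ) : Continuous (gauss m s2) := by
  unfold gauss; fun_prop

/-- AM-GM style: `c w - a w² ≤ c²/(4a)`. -/
lemma lin_sub_sq_le (a c w : ℝ) (ha : 0 < a) : c * w - a * w ^ 2 ≤ c ^ 2 / (4 * a) := by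
  rw [le_div_iff₀ (by positivity)]
  nlinarith [sq_nonneg (2 * a * w - c)]

lemma pow_le_exp_nat (w : ℝ) (hw : 0 ≤ w) (d : ℕ) : w ^ d ≤ Real.exp (d * w) := by
  calc w ^ d ≤ (Real.exp w) ^ d := pow_le_pow_left₀ hw (le_trans (by linarith) (Real.add_one_le_exp w)) d
  _ = Real.exp (d * w) := by rw [← Real.exp_nat_mul]

/-- Master domination: a polynomially-weighted Gaussian with variance `s2 ∈ [smin,sM]`
and mean within `δ` of `c` is dominated by a constant times the Gaussian with larger
variance `s' > sM` centered at `c`. -/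
lemma gauss_dom (smin sM s' δ : ℝ) (h0 : 0 < smin) (hm : smin ≤ sM) (hM : sM < s')
    (hδ : 0 ≤ δ) (d : ℕ) :
    ∃ M : ℝ, 0 ≤ M ∧ ∀ (m c s2 z : ℝ), smin ≤ s2 → s2 ≤ sM → |m - c| ≤ δ →
      |z - m| ^ d * gauss m s2 z ≤ M * gauss c s' z := by
  have hs' : 0 < s' := lt_of_le_of_lt (le_trans h0.le hm) hM
  have hsM : 0 < sM := lt_of_lt_of_le h0 hm
  set α : ℝ := 1 / (2 * sM) - 1 / (2 * s') with hα
  have hαpos : 0 < α := by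
    have : 1 / (2 * s') < 1 / (2 * sM) := by
      apply one_div_lt_one_div_of_lt (by positivity); linarith
    simpa [hα] using sub_pos.2 this
  set B : ℝ := δ / smin with hB
  have hBpos : 0 ≤ B := by positivity
  refine ⟨Real.sqrt (s' / smin) * Real.exp (d * δ + (d + B) ^ 2 / (4 * α)), by positivity, ?_⟩
  intro m c s2 z hs1 hs2 hmc
  have hs2pos : 0 < s2 := lt_of_lt_of_le h0 hs1
  set w : ℝ := |z - c| with hw
  have hwpos : 0 ≤ w := abs_nonneg _
  have habs : w ≤ |z - m| + δ := by
    calc w = |(z - m) + (m - c)| := by rw [hw]; ring_nf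
    _ ≤ |z - m| + |m - c| := abs_add_le _ _
    _ ≤ |z - m| + δ := by linarith
  have hzm : 0 ≤ |z - m| := abs_nonneg _
  have hsq : w ^ 2 - 2 * δ * w ≤ (z - m) ^ 2 := by
    rcases le_or_gt w δ with h | h
    · nlinarith [sq_nonneg (z - m), mul_nonneg hwpos (by linarith : (0:ℝ) ≤ 2 * δ - w)]
    · have haw : w - δ ≤ |z - m| := by linarith
      nlinarith [sq_abs (z - m), mul_self_le_mul_self (by linarith : (0:ℝ) ≤ w - δ) haw]
  -- exponent comparison
  have hexp : -((z - m) ^ 2) / (2 * s2) ≤ -((z - c) ^ 2) / (2 * s') + (-(α * w ^ 2) + B * w) := by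
    have hw2 : (z - c) ^ 2 = w ^ 2 := (sq_abs _).symm
    rw [hw2]
    have step1 : -((z - m) ^ 2) / (2 * s2) ≤ -(w ^ 2 - 2 * δ * w) / (2 * s2) := by
      apply div_le_div_of_nonneg_right (neg_le_neg hsq) (by positivity)
    have step2 : -(w ^ 2 - 2 * δ * w) / (2 * s2) = -(w ^ 2) / (2 * s2) + (δ / s2) * w := by
      field_simp; ring
    have step3 : -(w ^ 2) / (2 * s2) ≤ -(w ^ 2) / (2 * sM) := by
      rw [neg_div, neg_div, neg_le_neg_iff]
      gcongr
    have step4 : (δ / s2) * w ≤ B * w := by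
      rw [hB]; gcongr
    have rhs_eq : -(w ^ 2) / (2 * s') + (-(α * w ^ 2) + B * w) = -(w ^ 2) / (2 * sM) + B * w := by
      rw [hα]; field_simp; ring
    rw [rhs_eq]
    calc -((z - m) ^ 2) / (2 * s2) ≤ -(w ^ 2 - 2 * δ * w) / (2 * s2) := step1
    _ = -(w ^ 2) / (2 * s2) + (δ / s2) * w := step2
    _ ≤ -(w ^ 2) / (2 * sM) + B * w := add_le_add step3 step4
  -- normalization comparison
  have hnorm : (Real.sqrt (2 * Real.pi * s2))⁻¹ ≤
      Real.sqrt (s' / smin) * (Real.sqrt (2 * Real.pi * s'))⁻¹ := by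
    have h1 : (Real.sqrt (2 * Real.pi * s2))⁻¹ ≤ (Real.sqrt (2 * Real.pi * smin))⁻¹ := by
      gcongr
    have h2 : Real.sqrt (2 * Real.pi * smin) * Real.sqrt (s' / smin) = Real.sqrt (2 * Real.pi * s') := by
      rw [← Real.sqrt_mul (by positivity)]
      congr 1
      field_simp
    have h3 : (Real.sqrt (2 * Real.pi * smin))⁻¹ = Real.sqrt (s' / smin) * (Real.sqrt (2 * Real.pi * s'))⁻¹ := by
      rw [← h2]
      rw [mul_inv]
      have hsp : (0:ℝ) < Real.sqrt (s' / smin) := Real.sqrt_pos.2 (by positivity)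
      field_simp
    rw [h3] at h1; exact h1
  -- polynomial bound
  have habs2 : |z - m| ≤ w + δ := by
    calc |z - m| = |(z - c) + (c - m)| := by ring_nf
    _ ≤ |z - c| + |c - m| := abs_add_le _ _
    _ ≤ w + δ := by rw [abs_sub_comm] at hmc; exact add_le_add le_rfl hmc
  have hpoly : |z - m| ^ d ≤ Real.exp (d * δ) * Real.exp (d * w) := by
    calc |z - m| ^ d ≤ (w + δ) ^ d := by
          apply pow_le_pow_left₀ hzm habs2
    _ ≤ Real.exp (d * (w + δ)) := pow_le_exp_nat _ (by linarith) d
    _ = Real.exp (d * δ) * Real.exp (d * w) := by rw [← Real.exp_add]; ring_nf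
  -- final exponential bound
  have hfin : Real.exp (d * w) * Real.exp (-(α * w ^ 2) + B * w) ≤ Real.exp ((d + B) ^ 2 / (4 * α)) := by
    rw [← Real.exp_add]
    apply Real.exp_le_exp.2
    have := lin_sub_sq_le α (d + B) w hαpos
    nlinarith
  -- assemble
  have hG : gauss m s2 z ≤ Real.sqrt (s' / smin) * (Real.sqrt (2 * Real.pi * s'))⁻¹ *
      (Real.exp (-((z - c) ^ 2) / (2 * s')) * Real.exp (-(α * w ^ 2) + B * w)) := by
    unfold gauss
    rw [← Real.exp_add]
    apply mul_le_mul hnorm (Real.exp_le_exp.2 hexp) (Real.exp_nonneg _) (by positivity)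
  calc |z - m| ^ d * gauss m s2 z
      ≤ (Real.exp (d * δ) * Real.exp (d * w)) *
        (Real.sqrt (s' / smin) * (Real.sqrt (2 * Real.pi * s'))⁻¹ *
        (Real.exp (-((z - c) ^ 2) / (2 * s')) * Real.exp (-(α * w ^ 2) + B * w))) := by
        apply mul_le_mul hpoly hG (gauss_nonneg _ _ _) (by positivity)
    _ = Real.exp (d * δ) * Real.sqrt (s' / smin) *
        (Real.exp (d * w) * Real.exp (-(α * w ^ 2) + B * w)) * gauss c s' z := by
        unfold gauss; ring
    _ ≤ Real.exp (d * δ) * Real.sqrt (s' / smin) * Real.exp ((d + B) ^ 2 / (4 * α)) * gauss c s' z := by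
        apply mul_le_mul_of_nonneg_right _ (gauss_nonneg _ _ _)
        apply mul_le_mul_of_nonneg_left hfin (by positivity)
    _ = Real.sqrt (s' / smin) * Real.exp (↑d * δ + (↑d + B) ^ 2 / (4 * α)) * gauss c s' z := by
        rw [Real.exp_add]; ring

lemma hasDerivAt_gauss_mean (z : ℝ) {s2 : ℝ} (hs : 0 < s2) (m : ℝ) :
    HasDerivAt (fun m => gauss m s2 z) ((z - m) / s2 * gauss m s2 z) m := by
  have h1 : HasDerivAt (fun m : ℝ => -((z - m) ^ 2) / (2 * s2)) ((z - m) / s2) m := by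
    have h0 : HasDerivAt (fun m : ℝ => z - m) (-1) m := by
      simpa using (hasDerivAt_id m).const_sub z
    have h2 := ((h0.pow 2).neg).div_const (2 * s2)
    refine h2.congr_deriv ?_
    field_simp
    ring
  have h3 := (h1.exp).const_mul ((Real.sqrt (2 * Real.pi * s2))⁻¹)
  have hEq : (z - m) / s2 * gauss m s2 z =
      (Real.sqrt (2 * Real.pi * s2))⁻¹ * (Real.exp (-((z - m) ^ 2) / (2 * s2)) * ((z - m) / s2)) := by
    unfold gauss; ring
  rw [hEq]
  exact h3

lemma hasDerivAt_gauss_mean' (z : ℝ) {s2 : ℝ} (hs : 0 < s2) (m : ℝ) :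
    HasDerivAt (fun m => (z - m) / s2 * gauss m s2 z)
      (((z - m) ^ 2 / s2 ^ 2 - 1 / s2) * gauss m s2 z) m := by
  have h0 : HasDerivAt (fun m : ℝ => (z - m) / s2) (-1 / s2) m := by
    simpa using (((hasDerivAt_id m).const_sub z).div_const s2)
  have h2 := h0.mul (hasDerivAt_gauss_mean z hs m)
  refine h2.congr_deriv ?_
  ring

lemma hasDerivAt_gauss_time (x rh z : ℝ) {σ2 θ : ℝ} (hσ2 : 0 < σ2) (hθ : 0 < θ) :
    HasDerivAt (fun θ => gauss (x + rh * θ) (σ2 * θ) z)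
      ((-(1 / (2 * θ)) + rh * (z - (x + rh * θ)) / (σ2 * θ)
          + (z - (x + rh * θ)) ^ 2 / (2 * σ2 * θ ^ 2)) * gauss (x + rh * θ) (σ2 * θ) z) θ := by
  have hu : HasDerivAt (fun θ : ℝ => 2 * Real.pi * (σ2 * θ)) (2 * Real.pi * σ2) θ := by
    simpa [mul_assoc] using ((hasDerivAt_id θ).const_mul (2 * Real.pi * σ2))
  have husval : 0 < 2 * Real.pi * (σ2 * θ) := by positivity
  have hsqrtpos : 0 < Real.sqrt (2 * Real.pi * (σ2 * θ)) := Real.sqrt_pos.2 husval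
  have hsqrt : HasDerivAt (fun θ : ℝ => Real.sqrt (2 * Real.pi * (σ2 * θ)))
      (1 / (2 * Real.sqrt (2 * Real.pi * (σ2 * θ))) * (2 * Real.pi * σ2)) θ :=
    (Real.hasDerivAt_sqrt husval.ne').comp θ hu
  have hA : HasDerivAt (fun θ : ℝ => (Real.sqrt (2 * Real.pi * (σ2 * θ)))⁻¹)
      (-(1 / (2 * θ)) * (Real.sqrt (2 * Real.pi * (σ2 * θ)))⁻¹) θ := by
    have := hsqrt.inv hsqrtpos.ne'
    refine this.congr_deriv ?_
    symm
    rw [Real.sq_sqrt husval.le]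
    rw [eq_div_iff (by positivity)]
    have h := Real.sq_sqrt husval.le
    field_simp
  -- exponent part
  have hN : HasDerivAt (fun θ : ℝ => -((z - (x + rh * θ)) ^ 2)) (2 * rh * (z - (x + rh * θ))) θ := by
    have h0 : HasDerivAt (fun θ : ℝ => z - (x + rh * θ)) (-rh) θ := by
      simpa using ((hasDerivAt_id θ).const_mul rh).const_add x |>.const_sub z
    have := (h0.pow 2).neg
    refine this.congr_deriv ?_
    ring
  have hD : HasDerivAt (fun θ : ℝ => 2 * (σ2 * θ)) (2 * σ2) θ := by
    simpa [mul_assoc] using ((hasDerivAt_id θ).const_mul (2 * σ2))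
  have hq : HasDerivAt (fun θ : ℝ => -((z - (x + rh * θ)) ^ 2) / (2 * (σ2 * θ)))
      (rh * (z - (x + rh * θ)) / (σ2 * θ) + (z - (x + rh * θ)) ^ 2 / (2 * σ2 * θ ^ 2)) θ := by
    have := hN.div hD (by positivity)
    refine this.congr_deriv ?_
    field_simp
    ring
  have hB := hq.exp
  have hAB := hA.mul hB
  have hfun : (fun θ => gauss (x + rh * θ) (σ2 * θ) z) =
      fun θ : ℝ => (Real.sqrt (2 * Real.pi * (σ2 * θ)))⁻¹ *
        Real.exp (-((z - (x + rh * θ)) ^ 2) / (2 * (σ2 * θ))) := by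
    funext θ; unfold gauss; ring_nf
  rw [hfun]
  refine hAB.congr_deriv ?_
  unfold gauss
  ring

/-- Differentiation under the integral sign w.r.t. the Gaussian mean. -/
lemma hasDerivAt_int_mean (f : ℝ → ℝ) (hfc : Continuous f) (hf0 : ∀ x, 0 ≤ f x)
    {s s' : ℝ} (hs : 0 < s) (hss' : s < s')
    (hint : ∀ c : ℝ, Integrable (fun z => gauss c s z * f z))
    (hint' : ∀ c : ℝ, Integrable (fun z => gauss c s' z * f z))
    (c0 : ℝ) :
    Integrable (fun z => (z - c0) / s * gauss c0 s z * f z) ∧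
    HasDerivAt (fun c => ∫ z, gauss c s z * f z)
      (∫ z, (z - c0) / s * gauss c0 s z * f z) c0 := by
  obtain ⟨M, hM0, hM⟩ := gauss_dom s s s' 1 hs le_rfl hss' zero_le_one 1
  have key := hasDerivAt_integral_of_dominated_loc_of_deriv_le
    (F := fun c z => gauss c s z * f z)
    (F' := fun c z => (z - c) / s * gauss c s z * f z)
    (x₀ := c0) (bound := fun z => M / s * (gauss c0 s' z * f z))
    (μ := MeasureTheory.volume) (Metric.ball_mem_nhds c0 one_pos)
    (Filter.Eventually.of_forall fun c =>
      (((gauss_continuous c s).mul hfc)).aestronglyMeasurable)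
    (hint c0)
    ((((continuous_id.sub continuous_const).div_const s).mul (gauss_continuous c0 s)
      |>.mul hfc).aestronglyMeasurable)
    (Filter.Eventually.of_forall fun z => fun c hc => ?_)
    (((hint' c0).const_mul (M / s)))
    (Filter.Eventually.of_forall fun z => fun c _ => ?_)
  · exact key
  · -- bound
    have hmc : |c - c0| ≤ 1 := le_of_lt (by simpa [Real.dist_eq] using hc)
    have h1 := hM c c0 s z le_rfl le_rfl hmc
    have : ‖(z - c) / s * gauss c s z * f z‖ = |z - c| / s * gauss c s z * f z := by
      rw [Real.norm_eq_abs, abs_mul, abs_mul, abs_div, abs_of_pos hs,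
        abs_of_nonneg (gauss_nonneg _ _ _), abs_of_nonneg (hf0 z)]
    rw [this]
    have h2 : |z - c| / s * gauss c s z ≤ M / s * gauss c0 s' z := by
      rw [div_mul_eq_mul_div, div_mul_eq_mul_div]
      exact (div_le_div_iff_of_pos_right hs).2 (by simpa using h1)
    calc |z - c| / s * gauss c s z * f z ≤ M / s * gauss c0 s' z * f z :=
          mul_le_mul_of_nonneg_right h2 (hf0 z)
    _ = M / s * (gauss c0 s' z * f z) := by ring
  · -- differentiability
    exact (hasDerivAt_gauss_mean z hs c).mul_const (f z)

/-- Second differentiation under the integral sign w.r.t. the Gaussian mean. -/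
lemma hasDerivAt_int_mean' (f : ℝ → ℝ) (hfc : Continuous f) (hf0 : ∀ x, 0 ≤ f x)
    {s s' : ℝ} (hs : 0 < s) (hss' : s < s')
    (hint : ∀ c : ℝ, Integrable (fun z => gauss c s z * f z))
    (hint' : ∀ c : ℝ, Integrable (fun z => gauss c s' z * f z))
    (c0 : ℝ) :
    Integrable (fun z => ((z - c0) ^ 2 / s ^ 2 - 1 / s) * gauss c0 s z * f z) ∧
    HasDerivAt (fun c => ∫ z, (z - c) / s * gauss c s z * f z)
      (∫ z, ((z - c0) ^ 2 / s ^ 2 - 1 / s) * gauss c0 s z * f z) c0 := by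
  obtain ⟨M2, hM20, hM2⟩ := gauss_dom s s s' 1 hs le_rfl hss' zero_le_one 2
  obtain ⟨M0, hM00, hM0⟩ := gauss_dom s s s' 1 hs le_rfl hss' zero_le_one 0
  have key := hasDerivAt_integral_of_dominated_loc_of_deriv_le
    (F := fun c z => (z - c) / s * gauss c s z * f z)
    (F' := fun c z => ((z - c) ^ 2 / s ^ 2 - 1 / s) * gauss c s z * f z)
    (x₀ := c0) (bound := fun z => (M2 / s ^ 2 + M0 / s) * (gauss c0 s' z * f z))
    (μ := MeasureTheory.volume) (Metric.ball_mem_nhds c0 one_pos)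
    (Filter.Eventually.of_forall fun c =>
      ((((continuous_id.sub continuous_const).div_const s).mul (gauss_continuous c s)
        |>.mul hfc)).aestronglyMeasurable)
    (hasDerivAt_int_mean f hfc hf0 hs hss' hint hint' c0).1
    (((((continuous_id.sub continuous_const).pow 2).div_const (s ^ 2) |>.sub continuous_const).mul
        (gauss_continuous c0 s) |>.mul hfc).aestronglyMeasurable)
    (Filter.Eventually.of_forall fun z => fun c hc => ?_)
    (((hint' c0).const_mul _))
    (Filter.Eventually.of_forall fun z => fun c _ => ?_)
  · exact key
  · -- bound
    have hmc : |c - c0| ≤ 1 := le_of_lt (by simpa [Real.dist_eq] using hc)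
    have h2 := hM2 c c0 s z le_rfl le_rfl hmc
    have h0 := hM0 c c0 s z le_rfl le_rfl hmc
    have habs : |((z - c) ^ 2 / s ^ 2 - 1 / s) * gauss c s z * f z| =
        |(z - c) ^ 2 / s ^ 2 - 1 / s| * gauss c s z * f z := by
      rw [abs_mul, abs_mul, abs_of_nonneg (gauss_nonneg _ _ _), abs_of_nonneg (hf0 z)]
    rw [Real.norm_eq_abs, habs]
    have htri : |(z - c) ^ 2 / s ^ 2 - 1 / s| ≤ (z - c) ^ 2 / s ^ 2 + 1 / s := by
      refine (abs_sub _ _).trans ?_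
      rw [abs_of_nonneg (by positivity), abs_of_nonneg (by positivity)]
    have hb : |(z - c) ^ 2 / s ^ 2 - 1 / s| * gauss c s z ≤
        (M2 / s ^ 2 + M0 / s) * gauss c0 s' z := by
      calc |(z - c) ^ 2 / s ^ 2 - 1 / s| * gauss c s z
          ≤ ((z - c) ^ 2 / s ^ 2 + 1 / s) * gauss c s z :=
            mul_le_mul_of_nonneg_right htri (gauss_nonneg _ _ _)
        _ = (|z - c| ^ 2 * gauss c s z) / s ^ 2 + (|z - c| ^ 0 * gauss c s z) / s := by
            rw [sq_abs]; simp; ring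
        _ ≤ (M2 * gauss c0 s' z) / s ^ 2 + (M0 * gauss c0 s' z) / s := by
            gcongr
        _ = (M2 / s ^ 2 + M0 / s) * gauss c0 s' z := by ring
    calc |(z - c) ^ 2 / s ^ 2 - 1 / s| * gauss c s z * f z
        ≤ (M2 / s ^ 2 + M0 / s) * gauss c0 s' z * f z :=
          mul_le_mul_of_nonneg_right hb (hf0 z)
      _ = (M2 / s ^ 2 + M0 / s) * (gauss c0 s' z * f z) := by ring
  · -- differentiability
    exact (hasDerivAt_gauss_mean' z hs c).mul_const (f z)

/-- Differentiation under the integral sign w.r.t. time. -/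
lemma hasDerivAt_int_time (f : ℝ → ℝ) (hfc : Continuous f) (hf0 : ∀ x, 0 ≤ f x)
    {σ2 : ℝ} (hσ2 : 0 < σ2) (x rh : ℝ) {t t' : ℝ} (ht : 0 < t) (htt' : t < t')
    (hint : ∀ τ : ℝ, t / 2 ≤ τ → τ ≤ t' → ∀ c : ℝ,
      Integrable (fun z => gauss c (σ2 * τ) z * f z)) :
    HasDerivAt (fun θ => ∫ z, gauss (x + rh * θ) (σ2 * θ) z * f z)
      (∫ z, (-(1 / (2 * t)) + rh * (z - (x + rh * t)) / (σ2 * t)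
          + (z - (x + rh * t)) ^ 2 / (2 * σ2 * t ^ 2)) * gauss (x + rh * t) (σ2 * t) z * f z) t := by
  set tM : ℝ := (t + t') / 2 with htM
  set ε : ℝ := min (t / 2) ((t' - t) / 2) with hε
  have hεpos : 0 < ε := lt_min (by linarith) (by linarith)
  have hε1 : ε ≤ t / 2 := min_le_left _ _
  have hε2 : ε ≤ (t' - t) / 2 := min_le_right _ _
  set c : ℝ := x + rh * t with hc
  set s' : ℝ := σ2 * t' with hs'
  set δ : ℝ := |rh| * ε with hδ
  have hδ0 : 0 ≤ δ := by positivity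
  have hsmin : (0:ℝ) < σ2 * (t / 2) := by positivity
  have hminM : σ2 * (t / 2) ≤ σ2 * tM := by
    apply mul_le_mul_of_nonneg_left _ hσ2.le
    rw [htM]; linarith
  have hMs' : σ2 * tM < s' := by
    rw [hs', htM]
    apply mul_lt_mul_of_pos_left _ hσ2
    linarith
  obtain ⟨M0, hM00, hM0⟩ := gauss_dom (σ2 * (t / 2)) (σ2 * tM) s' δ hsmin hminM hMs' hδ0 0
  obtain ⟨M1, hM10, hM1⟩ := gauss_dom (σ2 * (t / 2)) (σ2 * tM) s' δ hsmin hminM hMs' hδ0 1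
  obtain ⟨M2, hM20, hM2⟩ := gauss_dom (σ2 * (t / 2)) (σ2 * tM) s' δ hsmin hminM hMs' hδ0 2
  set C : ℝ := (1 / t) * M0 + (2 * |rh| / (σ2 * t)) * M1 + (2 / (σ2 * t ^ 2)) * M2 with hC
  have key := hasDerivAt_integral_of_dominated_loc_of_deriv_le
    (F := fun θ z => gauss (x + rh * θ) (σ2 * θ) z * f z)
    (F' := fun θ z => (-(1 / (2 * θ)) + rh * (z - (x + rh * θ)) / (σ2 * θ)
          + (z - (x + rh * θ)) ^ 2 / (2 * σ2 * θ ^ 2)) * gauss (x + rh * θ) (σ2 * θ) z * f z)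
    (x₀ := t) (bound := fun z => C * (gauss c s' z * f z))
    (μ := MeasureTheory.volume) (Metric.ball_mem_nhds t hεpos)
    (Filter.Eventually.of_forall fun θ =>
      ((gauss_continuous _ _).mul hfc).aestronglyMeasurable)
    (hint t (by linarith) htt'.le c)
    (by
      apply Continuous.aestronglyMeasurable
      apply Continuous.mul _ hfc
      apply Continuous.mul _ (gauss_continuous _ _)
      fun_prop)
    (Filter.Eventually.of_forall fun z => fun θ hθ => ?_)
    (((hint t' (by linarith) le_rfl c).const_mul C))
    (Filter.Eventually.of_forall fun z => fun θ hθ => ?_)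
  · exact key.2
  · -- bound
    have hθd : |θ - t| < ε := by simpa [Real.dist_eq] using hθ
    have hθ1 : t / 2 < θ := by
      have h := abs_lt.1 hθd
      linarith [h.1, hε1]
    have hθ2 : θ ≤ tM := by
      have h := (abs_lt.1 hθd).2
      rw [htM]; linarith [hε2]
    have hθpos : 0 < θ := by linarith
    set m : ℝ := x + rh * θ with hm
    set u : ℝ := z - m with hu
    have hsθ1 : σ2 * (t / 2) ≤ σ2 * θ := mul_le_mul_of_nonneg_left hθ1.le hσ2.le
    have hsθ2 : σ2 * θ ≤ σ2 * tM := mul_le_mul_of_nonneg_left hθ2 hσ2.le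
    have hmc : |m - c| ≤ δ := by
      rw [hm, hc, hδ]
      have : x + rh * θ - (x + rh * t) = rh * (θ - t) := by ring
      rw [this, abs_mul]
      exact mul_le_mul_of_nonneg_left (le_of_lt hθd) (abs_nonneg _)
    have b0 := hM0 m c (σ2 * θ) z hsθ1 hsθ2 hmc
    have b1 := hM1 m c (σ2 * θ) z hsθ1 hsθ2 hmc
    have b2 := hM2 m c (σ2 * θ) z hsθ1 hsθ2 hmc
    have hG : (0:ℝ) ≤ gauss m (σ2 * θ) z := gauss_nonneg _ _ _
    -- coefficient bound
    have hcoef : |(-(1 / (2 * θ)) + rh * u / (σ2 * θ) + u ^ 2 / (2 * σ2 * θ ^ 2))| ≤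
        (1 / t) + (2 * |rh| / (σ2 * t)) * |u| + (2 / (σ2 * t ^ 2)) * u ^ 2 := by
      have t1 : |(-(1 / (2 * θ)))| = 1 / (2 * θ) := by
        rw [abs_neg, abs_of_pos (by positivity)]
      have t2 : |rh * u / (σ2 * θ)| = |rh| * |u| / (σ2 * θ) := by
        rw [abs_div, abs_mul, abs_of_pos (mul_pos hσ2 hθpos)]
      have t3 : |u ^ 2 / (2 * σ2 * θ ^ 2)| = u ^ 2 / (2 * σ2 * θ ^ 2) := by
        rw [abs_of_nonneg (div_nonneg (sq_nonneg u) (by positivity))]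
      have e1 : 1 / (2 * θ) ≤ 1 / t := by
        apply one_div_le_one_div_of_le ht; linarith
      have e2 : |rh| * |u| / (σ2 * θ) ≤ (2 * |rh| / (σ2 * t)) * |u| := by
        calc |rh| * |u| / (σ2 * θ) ≤ |rh| * |u| / (σ2 * (t / 2)) :=
              div_le_div_of_nonneg_left (by positivity)
                (mul_pos hσ2 (by linarith : (0:ℝ) < t / 2)) hsθ1
        _ = (2 * |rh| / (σ2 * t)) * |u| := by
            field_simp
      have e3 : u ^ 2 / (2 * σ2 * θ ^ 2) ≤ (2 / (σ2 * t ^ 2)) * u ^ 2 := by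
        have hθsq : (t / 2) ^ 2 ≤ θ ^ 2 :=
          pow_le_pow_left₀ (by linarith : (0:ℝ) ≤ t / 2) hθ1.le 2
        have hd2 : 2 * σ2 * (t / 2) ^ 2 ≤ 2 * σ2 * θ ^ 2 :=
          mul_le_mul_of_nonneg_left hθsq (by positivity : (0:ℝ) ≤ 2 * σ2)
        calc u ^ 2 / (2 * σ2 * θ ^ 2) ≤ u ^ 2 / (2 * σ2 * (t / 2) ^ 2) :=
              div_le_div_of_nonneg_left (sq_nonneg u) (by positivity) hd2
        _ = (2 / (σ2 * t ^ 2)) * u ^ 2 := by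
            field_simp
      calc |(-(1 / (2 * θ)) + rh * u / (σ2 * θ) + u ^ 2 / (2 * σ2 * θ ^ 2))|
          ≤ |(-(1 / (2 * θ)) + rh * u / (σ2 * θ))| + |u ^ 2 / (2 * σ2 * θ ^ 2)| := abs_add_le _ _
        _ ≤ |(-(1 / (2 * θ)))| + |rh * u / (σ2 * θ)| + |u ^ 2 / (2 * σ2 * θ ^ 2)| := by
            have := abs_add_le (-(1 / (2 * θ))) (rh * u / (σ2 * θ))
            linarith
        _ = 1 / (2 * θ) + |rh| * |u| / (σ2 * θ) + u ^ 2 / (2 * σ2 * θ ^ 2) := by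
            rw [t1, t2, t3]
        _ ≤ (1 / t) + (2 * |rh| / (σ2 * t)) * |u| + (2 / (σ2 * t ^ 2)) * u ^ 2 := by
            linarith
    have hnorm : ‖(-(1 / (2 * θ)) + rh * u / (σ2 * θ) + u ^ 2 / (2 * σ2 * θ ^ 2))
          * gauss m (σ2 * θ) z * f z‖ =
        |(-(1 / (2 * θ)) + rh * u / (σ2 * θ) + u ^ 2 / (2 * σ2 * θ ^ 2))|
          * gauss m (σ2 * θ) z * f z := by
      rw [Real.norm_eq_abs, abs_mul, abs_mul, abs_of_nonneg hG, abs_of_nonneg (hf0 z)]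
    rw [hnorm]
    have hmid : |(-(1 / (2 * θ)) + rh * u / (σ2 * θ) + u ^ 2 / (2 * σ2 * θ ^ 2))|
          * gauss m (σ2 * θ) z ≤ C * gauss c s' z := by
      calc |(-(1 / (2 * θ)) + rh * u / (σ2 * θ) + u ^ 2 / (2 * σ2 * θ ^ 2))| * gauss m (σ2 * θ) z
          ≤ ((1 / t) + (2 * |rh| / (σ2 * t)) * |u| + (2 / (σ2 * t ^ 2)) * u ^ 2)
            * gauss m (σ2 * θ) z := mul_le_mul_of_nonneg_right hcoef hG
        _ = (1 / t) * (|u| ^ 0 * gauss m (σ2 * θ) z)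
            + (2 * |rh| / (σ2 * t)) * (|u| ^ 1 * gauss m (σ2 * θ) z)
            + (2 / (σ2 * t ^ 2)) * (|u| ^ 2 * gauss m (σ2 * θ) z) := by
            rw [← sq_abs u]; ring
        _ ≤ (1 / t) * (M0 * gauss c s' z) + (2 * |rh| / (σ2 * t)) * (M1 * gauss c s' z)
            + (2 / (σ2 * t ^ 2)) * (M2 * gauss c s' z) := by
            gcongr <;> positivity
        _ = C * gauss c s' z := by rw [hC]; ring
    calc |(-(1 / (2 * θ)) + rh * u / (σ2 * θ) + u ^ 2 / (2 * σ2 * θ ^ 2))|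
          * gauss m (σ2 * θ) z * f z ≤ C * gauss c s' z * f z :=
          mul_le_mul_of_nonneg_right hmid (hf0 z)
      _ = C * (gauss c s' z * f z) := by ring
  · -- differentiability
    have hθd : |θ - t| < ε := by simpa [Real.dist_eq] using hθ
    have hθpos : 0 < θ := by
      have := (abs_lt.1 hθd).1
      have := hε1
      linarith
    exact (hasDerivAt_gauss_time x rh z hσ2 hθpos).mul_const (f z)

/-- At a local minimum where the derivative is differentiable, the second
derivative is nonnegative. -/
lemma deriv2_nonneg_of_isLocalMin {h : ℝ → ℝ} {x : ℝ}
    (hmin : IsLocalMin h x)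
    (hd : ∀ᶠ y in nhds x, DifferentiableAt ℝ h y)
    (hd2 : DifferentiableAt ℝ (deriv h) x) :
    0 ≤ deriv (deriv h) x := by
  by_contra hneg
  push_neg at hneg
  set d := deriv (deriv h) x with hdd
  have h0 : deriv h x = 0 := hmin.deriv_eq_zero
  have hslope : Filter.Tendsto (slope (deriv h) x) (nhdsWithin x {x}ᶜ) (nhds d) := by
    have := hd2.hasDerivAt
    rwa [hasDerivAt_iff_tendsto_slope] at this
  have hev0 : ∀ᶠ y in nhdsWithin x {x}ᶜ, slope (deriv h) x y < d / 2 :=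
    hslope.eventually (gt_mem_nhds (by linarith : d < d / 2))
  have hev : ∀ᶠ y in nhdsWithin x (Set.Ioi x), deriv h y < 0 := by
    have hle : nhdsWithin x (Set.Ioi x) ≤ nhdsWithin x {x}ᶜ :=
      nhdsWithin_mono x (fun y hy => ne_of_gt hy)
    filter_upwards [hev0.filter_mono hle, self_mem_nhdsWithin] with y hy hy'
    have hyx : 0 < y - x := sub_pos.2 hy'
    have : slope (deriv h) x y = (deriv h y - 0) / (y - x) := by
      rw [slope_def_field, h0]
    rw [this] at hy
    have := (div_lt_iff₀ hyx).1 hy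
    nlinarith
  obtain ⟨b, hbx, hIoo⟩ := mem_nhdsGT_iff_exists_Ioo_subset.1 hev
  obtain ⟨ε1, hε1, hball1⟩ := Metric.eventually_nhds_iff.1 hd
  obtain ⟨ε2, hε2, hball2⟩ := Metric.eventually_nhds_iff.1 hmin
  set b' : ℝ := min (x + min ε1 ε2 / 2) ((x + b) / 2) with hb'
  have hb'x : x < b' := by
    apply lt_min
    · have : 0 < min ε1 ε2 := lt_min hε1 hε2
      linarith
    · rw [mem_Ioi] at hbx; linarith
  have hb'b : b' < b := by
    rw [mem_Ioi] at hbx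
    calc b' ≤ (x + b) / 2 := min_le_right _ _
    _ < b := by linarith
  have hb'ball : ∀ y ∈ Set.Icc x b', dist y x < min ε1 ε2 := by
    intro y hy
    rw [Real.dist_eq, abs_of_nonneg (by linarith [hy.1])]
    have h1 : b' ≤ x + min ε1 ε2 / 2 := min_le_left _ _
    have : 0 < min ε1 ε2 := lt_min hε1 hε2
    linarith [hy.2]
  have hanti : StrictAntiOn h (Set.Icc x b') := by
    apply strictAntiOn_of_deriv_neg (convex_Icc x b')
    · intro y hy
      exact (hball1 (lt_of_lt_of_le (hb'ball y hy) (min_le_left _ _))).continuousAt.continuousWithinAt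
    · intro y hy
      rw [interior_Icc] at hy
      apply hIoo
      exact ⟨hy.1, lt_trans hy.2 hb'b⟩
  have hlt : h b' < h x :=
    hanti (Set.left_mem_Icc.2 hb'x.le) (Set.right_mem_Icc.2 hb'x.le) hb'x
  have hge : h x ≤ h b' :=
    hball2 (lt_of_lt_of_le (hb'ball b' (Set.right_mem_Icc.2 hb'x.le)) (min_le_right _ _))
  linarith

/-- Let `g := am_{T0}(f)` be the embedded American option of a
continuous nonnegative payoff `f`, with the defining infimum attained at a
continuous curve `θ̆`. At every point `x` with `0 < θ̆(x) < T0` at which `g` is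
twice differentiable, the concavity condition
`(σ²/2) g''(x) + (r - σ²/2) g'(x) - r g(x) ≤ 0` holds. -/
theorem embedded_American_concavity_condition
    (r σ T0 : ℝ) (hr : 0 ≤ r) (hσ : 0 < σ) (hT0 : 0 < T0)
    (f : ℝ → ℝ) (hfc : Continuous f) (hf0 : ∀ x, 0 ≤ f x)
    (hfint : ∀ θ ∈ Set.Ioc (0 : ℝ) T0, ∀ x : ℝ,
      Integrable (fun y => gauss (x + (r - σ ^ 2 / 2) * θ) (σ ^ 2 * θ) y * f y))
    (θbr : ℝ → ℝ) (hθc : Continuous θbr) (hθmem : ∀ x, θbr x ∈ Set.Icc (0 : ℝ) T0)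
    (gam : ℝ → ℝ) (hgam : ∀ x : ℝ, gam x = ⨅ θ : Set.Icc (0 : ℝ) T0, vEu r σ f θ.1 x)
    (hmin : ∀ x : ℝ, gam x = vEu r σ f (θbr x) x)
    (x : ℝ) (hx1 : 0 < θbr x) (hx2 : θbr x < T0)
    (hdiff : ∀ᶠ y in nhds x, DifferentiableAt ℝ gam y)
    (hdiff2 : DifferentiableAt ℝ (deriv gam) x) :
    σ ^ 2 / 2 * deriv (deriv gam) x + (r - σ ^ 2 / 2) * deriv gam x - r * gam x ≤ 0 := by
  set rh : ℝ := r - σ ^ 2 / 2 with hrh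
  set t : ℝ := θbr x with htdef
  have ht : 0 < t := hx1
  have ht2 : t < T0 := hx2
  set t' : ℝ := (t + T0) / 2 with ht'def
  have htt' : t < t' := by rw [ht'def]; linarith
  have ht'T : t' ≤ T0 := by rw [ht'def]; linarith
  have ht'0 : 0 < t' := by linarith
  have hσ2 : (0:ℝ) < σ ^ 2 := by positivity
  have hs : (0:ℝ) < σ ^ 2 * t := by positivity
  have hss' : σ ^ 2 * t < σ ^ 2 * t' := by
    exact mul_lt_mul_of_pos_left htt' hσ2
  -- integrability for arbitrary means
  have hint : ∀ τ ∈ Set.Ioc (0:ℝ) T0, ∀ c : ℝ,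
      Integrable (fun z => gauss c (σ ^ 2 * τ) z * f z) := by
    intro τ hτ c
    have h := hfint τ hτ (c - rh * τ)
    have e : c - rh * τ + rh * τ = c := by ring
    rwa [e] at h
  have hintS : ∀ c : ℝ, Integrable (fun z => gauss c (σ ^ 2 * t) z * f z) :=
    hint t ⟨ht, ht2.le⟩
  have hintS' : ∀ c : ℝ, Integrable (fun z => gauss c (σ ^ 2 * t') z * f z) :=
    hint t' ⟨ht'0, ht'T⟩
  -- nonnegativity of vEu and lower bound by gam
  have hvEu_nonneg : ∀ θ y : ℝ, 0 ≤ vEu r σ f θ y := by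
    intro θ y
    unfold vEu
    split
    · exact hf0 y
    · exact mul_nonneg (Real.exp_nonneg _)
        (integral_nonneg fun z => mul_nonneg (gauss_nonneg _ _ _) (hf0 z))
  have hlow : ∀ θ ∈ Set.Icc (0:ℝ) T0, ∀ y : ℝ, gam y ≤ vEu r σ f θ y := by
    intro θ hθ y
    rw [hgam y]
    have hbdd : BddBelow (Set.range fun θ : Set.Icc (0:ℝ) T0 => vEu r σ f θ.1 y) := by
      refine ⟨0, ?_⟩
      rintro a ⟨θ', rfl⟩
      exact hvEu_nonneg _ _
    exact ciInf_le hbdd ⟨θ, hθ⟩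
  -- the European value at fixed time t, as a function of space
  set V : ℝ → ℝ := fun y =>
    Real.exp (-(r * t)) * ∫ z, gauss (y + rh * t) (σ ^ 2 * t) z * f z with hVdef
  have hVeq : ∀ y : ℝ, vEu r σ f t y = V y := by
    intro y
    rw [hVdef]
    simp only [vEu, if_neg ht.ne']
    rfl
  -- space derivatives
  have hV1 : ∀ y0 : ℝ, HasDerivAt V
      (Real.exp (-(r * t)) *
        ∫ z, (z - (y0 + rh * t)) / (σ ^ 2 * t) * gauss (y0 + rh * t) (σ ^ 2 * t) z * f z) y0 := by
    intro y0
    have h1 := (hasDerivAt_int_mean f hfc hf0 hs hss' hintS hintS' (y0 + rh * t)).2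
    have h2 := h1.comp y0 ((hasDerivAt_id y0).add_const (rh * t))
    have h3 := h2.const_mul (Real.exp (-(r * t)))
    simpa [Function.comp] using h3
  set J1 : ℝ → ℝ := fun y =>
    Real.exp (-(r * t)) *
      ∫ z, (z - (y + rh * t)) / (σ ^ 2 * t) * gauss (y + rh * t) (σ ^ 2 * t) z * f z with hJ1def
  have hJ1diff : HasDerivAt J1
      (Real.exp (-(r * t)) *
        ∫ z, ((z - (x + rh * t)) ^ 2 / (σ ^ 2 * t) ^ 2 - 1 / (σ ^ 2 * t)) *
          gauss (x + rh * t) (σ ^ 2 * t) z * f z) x := by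
    have h1 := (hasDerivAt_int_mean' f hfc hf0 hs hss' hintS hintS' (x + rh * t)).2
    have h2 := h1.comp x ((hasDerivAt_id x).add_const (rh * t))
    have h3 := h2.const_mul (Real.exp (-(r * t)))
    simpa [Function.comp] using h3
  -- time derivative
  set K : ℝ → ℝ := fun θ => ∫ z, gauss (x + rh * θ) (σ ^ 2 * θ) z * f z with hKdef
  have hint2 : ∀ τ : ℝ, t / 2 ≤ τ → τ ≤ t' → ∀ c : ℝ,
      Integrable (fun z => gauss c (σ ^ 2 * τ) z * f z) := by
    intro τ h1 h2 c
    exact hint τ ⟨by linarith, by linarith⟩ c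
  have hK : HasDerivAt K
      (∫ z, (-(1 / (2 * t)) + rh * (z - (x + rh * t)) / (σ ^ 2 * t)
          + (z - (x + rh * t)) ^ 2 / (2 * σ ^ 2 * t ^ 2)) *
          gauss (x + rh * t) (σ ^ 2 * t) z * f z) t :=
    hasDerivAt_int_time f hfc hf0 hσ2 x rh ht htt' hint2
  -- derivative of θ ↦ vEu θ x at t
  have hexp : HasDerivAt (fun θ : ℝ => Real.exp (-(r * θ)))
      (Real.exp (-(r * t)) * (-r)) t := by
    have h0 : HasDerivAt (fun θ : ℝ => -(r * θ)) (-r) t := by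
      exact (((hasDerivAt_id t).const_mul r).neg).congr_deriv (by ring)
    exact h0.exp
  have hprod := hexp.mul hK
  have hEvEq : (fun θ => vEu r σ f θ x) =ᶠ[nhds t]
      (fun θ => Real.exp (-(r * θ)) * K θ) := by
    filter_upwards [eventually_ne_nhds ht.ne'] with θ hθ
    simp only [vEu, if_neg hθ, hKdef]
    rfl
  have hvEuθ : HasDerivAt (fun θ => vEu r σ f θ x)
      (Real.exp (-(r * t)) * (-r) * K t + Real.exp (-(r * t)) *
        ∫ z, (-(1 / (2 * t)) + rh * (z - (x + rh * t)) / (σ ^ 2 * t)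
          + (z - (x + rh * t)) ^ 2 / (2 * σ ^ 2 * t ^ 2)) *
          gauss (x + rh * t) (σ ^ 2 * t) z * f z) t :=
    hprod.congr_of_eventuallyEq hEvEq
  -- t is an interior minimum in time
  have hlocmin : IsLocalMin (fun θ => vEu r σ f θ x) t := by
    have : ∀ᶠ θ in nhds t, vEu r σ f t x ≤ vEu r σ f θ x := by
      filter_upwards [isOpen_Ioo.eventually_mem (⟨ht, ht2⟩ : t ∈ Set.Ioo 0 T0)] with θ hθ
      calc vEu r σ f t x = gam x := (hmin x).symm
      _ ≤ vEu r σ f θ x := hlow θ ⟨hθ.1.le, hθ.2.le⟩ x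
    exact this
  have hθzero := hlocmin.hasDerivAt_eq_zero hvEuθ
  -- pointwise PDE identity for the time-derivative integrand
  have hD1int := (hasDerivAt_int_mean f hfc hf0 hs hss' hintS hintS' (x + rh * t)).1
  have hD2int := (hasDerivAt_int_mean' f hfc hf0 hs hss' hintS hintS' (x + rh * t)).1
  have hPDE : (∫ z, (-(1 / (2 * t)) + rh * (z - (x + rh * t)) / (σ ^ 2 * t)
          + (z - (x + rh * t)) ^ 2 / (2 * σ ^ 2 * t ^ 2)) *
          gauss (x + rh * t) (σ ^ 2 * t) z * f z)
      = σ ^ 2 / 2 * (∫ z, ((z - (x + rh * t)) ^ 2 / (σ ^ 2 * t) ^ 2 - 1 / (σ ^ 2 * t)) *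
          gauss (x + rh * t) (σ ^ 2 * t) z * f z)
        + rh * (∫ z, (z - (x + rh * t)) / (σ ^ 2 * t) * gauss (x + rh * t) (σ ^ 2 * t) z * f z) := by
    rw [← integral_const_mul, ← integral_const_mul, ← integral_add
      (hD2int.const_mul _) (hD1int.const_mul _)]
    congr 1
    funext z
    have hσne : σ ≠ 0 := hσ.ne'
    have htne : t ≠ 0 := ht.ne'
    field_simp
    ring
  -- space minimum of V - gam at x
  set h : ℝ → ℝ := fun y => V y - gam y with hhdef
  have hh0 : ∀ y, 0 ≤ h y := by
    intro y
    rw [hhdef]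
    have := hlow t ⟨ht.le, ht2.le⟩ y
    rw [hVeq y] at this
    simp only [sub_nonneg]
    exact this
  have hhx : h x = 0 := by
    rw [hhdef]
    simp only [sub_eq_zero]
    rw [← hVeq x, ← hmin x]
  have hlocmin2 : IsLocalMin h x := by
    apply Filter.Eventually.of_forall
    intro y
    rw [hhx]
    exact hh0 y
  -- first-order condition in space
  have hgamd : HasDerivAt gam (deriv gam x) x := hdiff.self_of_nhds.hasDerivAt
  have hhd1 : HasDerivAt h (J1 x - deriv gam x) x := (hV1 x).sub hgamd
  have hfirst : J1 x - deriv gam x = 0 := hlocmin2.hasDerivAt_eq_zero hhd1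
  -- second-order condition in space
  have hhd : ∀ᶠ y in nhds x, DifferentiableAt ℝ h y := by
    filter_upwards [hdiff] with y hy
    exact ((hV1 y).differentiableAt).sub hy
  have hEv : deriv h =ᶠ[nhds x] fun y => J1 y - deriv gam y := by
    filter_upwards [hdiff] with y hy
    exact ((hV1 y).sub hy.hasDerivAt).deriv
  have hhd2 : DifferentiableAt ℝ (deriv h) x := by
    rw [Filter.EventuallyEq.differentiableAt_iff hEv]
    exact hJ1diff.differentiableAt.sub hdiff2
  have hsecond : 0 ≤ deriv (deriv h) x :=
    deriv2_nonneg_of_isLocalMin hlocmin2 hhd hhd2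
  have hderiv2 : deriv (deriv h) x =
      (Real.exp (-(r * t)) *
        ∫ z, ((z - (x + rh * t)) ^ 2 / (σ ^ 2 * t) ^ 2 - 1 / (σ ^ 2 * t)) *
          gauss (x + rh * t) (σ ^ 2 * t) z * f z) - deriv (deriv gam) x := by
    rw [hEv.deriv_eq]
    exact (hJ1diff.sub hdiff2.hasDerivAt).deriv
  -- assemble
  set E : ℝ := Real.exp (-(r * t)) with hEdef
  set I0x : ℝ := ∫ z, gauss (x + rh * t) (σ ^ 2 * t) z * f z with hI0def
  set I1x : ℝ := ∫ z, (z - (x + rh * t)) / (σ ^ 2 * t) * gauss (x + rh * t) (σ ^ 2 * t) z * f z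
    with hI1def
  set I2x : ℝ := ∫ z, ((z - (x + rh * t)) ^ 2 / (σ ^ 2 * t) ^ 2 - 1 / (σ ^ 2 * t)) *
      gauss (x + rh * t) (σ ^ 2 * t) z * f z with hI2def
  -- facts
  have F1 : deriv gam x = E * I1x := by
    have : J1 x = E * I1x := rfl
    linarith [hfirst, this.symm.le, this.le]
  have F2 : gam x = E * I0x := by
    rw [hmin x, ← htdef, hVeq x, hVdef]
  have F3 : deriv (deriv gam) x ≤ E * I2x := by
    rw [hderiv2] at hsecond
    linarith
  have F4 : E * (-r) * I0x + E * (σ ^ 2 / 2 * I2x + rh * I1x) = 0 := by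
    have hKt : K t = I0x := rfl
    rw [hPDE, hKt] at hθzero
    linarith [hθzero]
  have hgoal : σ ^ 2 / 2 * deriv (deriv gam) x ≤ σ ^ 2 / 2 * (E * I2x) :=
    mul_le_mul_of_nonneg_left F3 (by positivity)
  rw [F1, F2]
  nlinarith [hgoal, F4]
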